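/- Let Q : S × A → ℝ be L-Lipschitz in a for each s, let π, π' be two policies on a finite MDP, and let ρ^{π'}_{ρ̂} be the occupancy measure of (ρ̂, π', T). Then E_{(s,a)∼ρ^{π'}_{ρ̂}(s)π'(a|s)} |Q(s,a) − (B^{π'}Q)(s,a)| ≤ E_{(s,a)∼ρ^{π'}_{ρ̂}(s)π'(a|s)} [ |Q(s,a) − (B^π Q)(s,a)| + L · W₁(π(·|s), π'(·|s)) ]. -/

import Mathlib

open Finset

/-- Changing the policy in the Bellman operator costs at most `L · W₁` on a
Lipschitz Q, in expectation under the occupancy measure of π'. -/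
theorem bellman_error_policy_change {S A : Type*} [Fintype S] [Fintype A]
    [MetricSpace A] [Nonempty A]
    (γ : ℝ) (hγ0 : 0 < γ) (hγ1 : γ < 1)
    (T : S → A → S → ℝ) (hT : ∀ s a s', 0 ≤ T s a s') (hT1 : ∀ s a, ∑ s', T s a s' = 1)
    (r : S → A → ℝ)
    (π π' : S → A → ℝ) (hπ : ∀ s a, 0 ≤ π s a) (hπ1 : ∀ s, ∑ a, π s a = 1)
    (hπ' : ∀ s a, 0 ≤ π' s a) (hπ'1 : ∀ s, ∑ a, π' s a = 1)
    (Q : S → A → ℝ)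
    (L : ℝ) (hL : 0 ≤ L) (hLip : ∀ s a a', |Q s a - Q s a'| ≤ L * dist a a')
    (ρhat : S → ℝ) (hρhat : ∀ s, 0 ≤ ρhat s) (hρhat1 : ∑ s, ρhat s = 1)
    (ρ : ℕ → S → ℝ) (hρ0 : ∀ s, ρ 0 s = ρhat s)
    (hρrec : ∀ i s, ρ (i+1) s = ∑ s', ∑ a', T s' a' s * π' s' a' * ρ i s')
    (W1 : S → ℝ)
    (hW1 : ∀ s, W1 s = sSup {x | ∃ f : A → ℝ, (∀ a a', |f a - f a'| ≤ dist a a') ∧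
        x = |(∑ a, f a * π s a) - ∑ a, f a * π' s a|}) :
    ∑ s, ((1-γ) * ∑' i : ℕ, γ^i * ρ i s) * ∑ a, π' s a *
        |Q s a - (r s a + γ * ∑ s', T s a s' * ∑ a', π' s' a' * Q s' a')| ≤
      ∑ s, ((1-γ) * ∑' i : ℕ, γ^i * ρ i s) * ∑ a, π' s a *
        (|Q s a - (r s a + γ * ∑ s', T s a s' * ∑ a', π s' a' * Q s' a')| +
          L * W1 s) := by
  classical
  -- basic facts about ρ
  have hρnn : ∀ i s, 0 ≤ ρ i s := by
    intro i
    induction i with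
    | zero => intro s; rw [hρ0]; exact hρhat s
    | succ n ih =>
      intro s
      rw [hρrec]
      exact Finset.sum_nonneg fun s' _ => Finset.sum_nonneg fun a' _ =>
        mul_nonneg (mul_nonneg (hT _ _ _) (hπ' _ _)) (ih s')
  have hρsum : ∀ i, ∑ s, ρ i s = 1 := by
    intro i
    induction i with
    | zero => simp only [hρ0]; exact hρhat1
    | succ n ih =>
      simp only [hρrec]
      rw [Finset.sum_comm]
      have : ∀ s' : S, ∑ s, ∑ a', T s' a' s * π' s' a' * ρ n s'
          = ∑ a', (∑ s, T s' a' s) * π' s' a' * ρ n s' := by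
        intro s'
        rw [Finset.sum_comm]
        congr 1; ext a'
        rw [Finset.sum_mul, Finset.sum_mul]
      simp only [this, hT1, one_mul]
      calc ∑ s', ∑ a', π' s' a' * ρ n s' = ∑ s', (∑ a', π' s' a') * ρ n s' := by
            congr 1; ext s'; rw [Finset.sum_mul]
        _ = 1 := by simp only [hπ'1, one_mul]; exact ih
  have hρle1 : ∀ i s, ρ i s ≤ 1 := by
    intro i s
    calc ρ i s ≤ ∑ s', ρ i s' :=
          Finset.single_le_sum (fun s' _ => hρnn i s') (Finset.mem_univ s)
      _ = 1 := hρsum i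
  have hsumm : ∀ s, Summable (fun i : ℕ => γ^i * ρ i s) := by
    intro s
    apply Summable.of_nonneg_of_le (fun i => mul_nonneg (pow_nonneg hγ0.le i) (hρnn i s))
      (fun i => ?_) (summable_geometric_of_lt_one hγ0.le hγ1)
    calc γ^i * ρ i s ≤ γ^i * 1 := by
          exact mul_le_mul_of_nonneg_left (hρle1 i s) (pow_nonneg hγ0.le i)
      _ = γ^i := mul_one _
  set w : S → ℝ := fun s => (1-γ) * ∑' i : ℕ, γ^i * ρ i s with hw
  have hwnn : ∀ s, 0 ≤ w s := fun s =>
    mul_nonneg (by linarith) (tsum_nonneg fun i => mul_nonneg (pow_nonneg hγ0.le i) (hρnn i s))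
  -- flow equation
  have hflow : ∀ s', γ * ∑ s, ∑ a, w s * π' s a * T s a s' ≤ w s' := by
    intro s'
    have h1 : ∑' i : ℕ, γ^i * ρ i s'
        = ρ 0 s' + ∑' i : ℕ, γ^(i+1) * ρ (i+1) s' := by
      rw [Summable.tsum_eq_zero_add (hsumm s')]
      simp
    have h2 : ∑' i : ℕ, γ^(i+1) * ρ (i+1) s'
        = γ * ∑ s, ∑ a, T s a s' * π' s a * ∑' i : ℕ, γ^i * ρ i s := by
      have heach : ∀ i : ℕ, γ^(i+1) * ρ (i+1) s'
          = γ * ∑ s, ∑ a, T s a s' * π' s a * (γ^i * ρ i s) := by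
        intro i
        rw [hρrec]
        simp only [Finset.mul_sum]
        refine Finset.sum_congr rfl fun s _ => Finset.sum_congr rfl fun a _ => ?_
        ring
      simp only [heach]
      rw [tsum_mul_left]
      congr 1
      rw [Summable.tsum_finsetSum fun s _ => summable_sum fun a _ => ((hsumm s).mul_left _)]
      refine Finset.sum_congr rfl fun s _ => ?_
      rw [Summable.tsum_finsetSum fun a _ => ((hsumm s).mul_left _)]
      refine Finset.sum_congr rfl fun a _ => ?_
      rw [tsum_mul_left]
    have hws : ∀ t, w t = (1-γ) * ∑' i : ℕ, γ^i * ρ i t := fun t => rfl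
    have key : w s' = (1-γ) * ρhat s' + γ * ∑ s, ∑ a, w s * π' s a * T s a s' := by
      rw [hws s', h1, h2, hρ0, mul_add]
      congr 1
      simp only [hws, Finset.mul_sum]
      refine Finset.sum_congr rfl fun s _ => Finset.sum_congr rfl fun a _ => ?_
      ring
    have : 0 ≤ (1-γ) * ρhat s' := mul_nonneg (by linarith) (hρhat s')
    linarith [key]
  -- boundedness of the W1 set
  obtain ⟨a0⟩ := (inferInstance : Nonempty A)
  have hbdd : ∀ s, BddAbove {x | ∃ f : A → ℝ, (∀ a a', |f a - f a'| ≤ dist a a') ∧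
      x = |(∑ a, f a * π s a) - ∑ a, f a * π' s a|} := by
    intro s
    refine ⟨2 * ∑ a, dist a a0, ?_⟩
    rintro x ⟨f, hf, rfl⟩
    have hπle1 : ∀ a, π s a ≤ 1 := by
      intro a
      calc π s a ≤ ∑ a', π s a' :=
            Finset.single_le_sum (fun a' _ => hπ s a') (Finset.mem_univ a)
        _ = 1 := hπ1 s
    have hπ'le1 : ∀ a, π' s a ≤ 1 := by
      intro a
      calc π' s a ≤ ∑ a', π' s a' :=
            Finset.single_le_sum (fun a' _ => hπ' s a') (Finset.mem_univ a)
        _ = 1 := hπ'1 s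
    have hrw : (∑ a, f a * π s a) - ∑ a, f a * π' s a
        = (∑ a, (f a - f a0) * π s a) - ∑ a, (f a - f a0) * π' s a := by
      simp only [sub_mul, Finset.sum_sub_distrib, ← Finset.mul_sum]
      rw [hπ1, hπ'1]
      ring
    rw [hrw]
    calc |(∑ a, (f a - f a0) * π s a) - ∑ a, (f a - f a0) * π' s a|
        ≤ |∑ a, (f a - f a0) * π s a| + |∑ a, (f a - f a0) * π' s a| := abs_sub _ _
      _ ≤ (∑ a, |(f a - f a0) * π s a|) + ∑ a, |(f a - f a0) * π' s a| :=
          add_le_add (Finset.abs_sum_le_sum_abs _ _) (Finset.abs_sum_le_sum_abs _ _)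
      _ ≤ (∑ a, dist a a0) + ∑ a, dist a a0 := by
          apply add_le_add <;> apply Finset.sum_le_sum <;> intro a _
          · rw [abs_mul, abs_of_nonneg (hπ s a)]
            calc |f a - f a0| * π s a ≤ dist a a0 * 1 :=
                  mul_le_mul (hf a a0) (hπle1 a) (hπ s a) dist_nonneg
              _ = dist a a0 := mul_one _
          · rw [abs_mul, abs_of_nonneg (hπ' s a)]
            calc |f a - f a0| * π' s a ≤ dist a a0 * 1 :=
                  mul_le_mul (hf a a0) (hπ'le1 a) (hπ' s a) dist_nonneg
              _ = dist a a0 := mul_one _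
      _ = 2 * ∑ a, dist a a0 := by ring
  have hW1nn : ∀ s, 0 ≤ W1 s := by
    intro s
    rw [hW1]
    apply le_csSup (hbdd s)
    exact ⟨fun _ => 0, fun a a' => by simpa using dist_nonneg, by simp⟩
  -- key Wasserstein bound
  have hWkey : ∀ t, |(∑ a, π t a * Q t a) - ∑ a, π' t a * Q t a| ≤ L * W1 t := by
    intro t
    rcases eq_or_lt_of_le hL with hL0 | hLpos
    · have hconst : ∀ a, Q t a = Q t a0 := by
        intro a
        have := hLip t a a0
        rw [← hL0] at this
        simp only [zero_mul] at this
        have := abs_nonpos_iff.mp (le_trans this (le_refl 0))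
        linarith [sub_eq_zero.mp this]
      have h1 : ∑ a, π t a * Q t a = Q t a0 := by
        simp only [hconst]
        rw [← Finset.sum_mul, hπ1, one_mul]
      have h2 : ∑ a, π' t a * Q t a = Q t a0 := by
        simp only [hconst]
        rw [← Finset.sum_mul, hπ'1, one_mul]
      rw [h1, h2, ← hL0]
      simp
    · set f : A → ℝ := fun a => Q t a / L with hfdef
      have hf : ∀ a a', |f a - f a'| ≤ dist a a' := by
        intro a a'
        rw [hfdef]
        simp only
        rw [div_sub_div_same, abs_div, abs_of_pos hLpos, div_le_iff₀ hLpos]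
        rw [mul_comm]
        exact hLip t a a'
      have hmem : |(∑ a, f a * π t a) - ∑ a, f a * π' t a| ∈
          {x | ∃ g : A → ℝ, (∀ a a', |g a - g a'| ≤ dist a a') ∧
            x = |(∑ a, g a * π t a) - ∑ a, g a * π' t a|} := ⟨f, hf, rfl⟩
      have hle : |(∑ a, f a * π t a) - ∑ a, f a * π' t a| ≤ W1 t := by
        rw [hW1]; exact le_csSup (hbdd t) hmem
      have : L * |(∑ a, f a * π t a) - ∑ a, f a * π' t a|
          = |(∑ a, π t a * Q t a) - ∑ a, π' t a * Q t a| := by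
        rw [← abs_of_pos hLpos, ← abs_mul, mul_sub, Finset.mul_sum, Finset.mul_sum]
        congr 2 <;> · congr 1; ext a; rw [hfdef]; field_simp
      calc |(∑ a, π t a * Q t a) - ∑ a, π' t a * Q t a|
          = L * |(∑ a, f a * π t a) - ∑ a, f a * π' t a| := this.symm
        _ ≤ L * W1 t := mul_le_mul_of_nonneg_left hle hL
  -- pointwise Bellman bound
  have hpt : ∀ s a,
      |Q s a - (r s a + γ * ∑ s', T s a s' * ∑ a', π' s' a' * Q s' a')|
        ≤ |Q s a - (r s a + γ * ∑ s', T s a s' * ∑ a', π s' a' * Q s' a')|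
          + γ * ∑ s', T s a s' * (L * W1 s') := by
    intro s a
    have habs : |Q s a - (r s a + γ * ∑ s', T s a s' * ∑ a', π' s' a' * Q s' a')|
        ≤ |Q s a - (r s a + γ * ∑ s', T s a s' * ∑ a', π s' a' * Q s' a')|
          + |(r s a + γ * ∑ s', T s a s' * ∑ a', π s' a' * Q s' a')
            - (r s a + γ * ∑ s', T s a s' * ∑ a', π' s' a' * Q s' a')| := by
      have := abs_sub_le (Q s a - (r s a + γ * ∑ s', T s a s' * ∑ a', π s' a' * Q s' a'))
        0 ((r s a + γ * ∑ s', T s a s' * ∑ a', π' s' a' * Q s' a')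
          - (r s a + γ * ∑ s', T s a s' * ∑ a', π s' a' * Q s' a'))
      calc |Q s a - (r s a + γ * ∑ s', T s a s' * ∑ a', π' s' a' * Q s' a')|
          = |(Q s a - (r s a + γ * ∑ s', T s a s' * ∑ a', π s' a' * Q s' a'))
            - ((r s a + γ * ∑ s', T s a s' * ∑ a', π' s' a' * Q s' a')
              - (r s a + γ * ∑ s', T s a s' * ∑ a', π s' a' * Q s' a'))| := by ring_nf
        _ ≤ _ := by
            rw [abs_sub_comm] at *
            calc _ ≤ _ := abs_sub _ _
              _ = _ := by rw [abs_sub_comm]; ring_nf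
    refine le_trans habs (add_le_add_right ?_ _)
    have heq : (r s a + γ * ∑ s', T s a s' * ∑ a', π s' a' * Q s' a')
        - (r s a + γ * ∑ s', T s a s' * ∑ a', π' s' a' * Q s' a')
        = γ * ∑ s', T s a s' * ((∑ a', π s' a' * Q s' a') - ∑ a', π' s' a' * Q s' a') := by
      have hsplit : ∀ s', T s a s' * ((∑ a', π s' a' * Q s' a') - ∑ a', π' s' a' * Q s' a')
          = T s a s' * ∑ a', π s' a' * Q s' a' - T s a s' * ∑ a', π' s' a' * Q s' a' :=
        fun s' => by ring
      simp only [hsplit, Finset.sum_sub_distrib]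
      ring
    rw [heq, abs_mul, abs_of_pos hγ0]
    apply mul_le_mul_of_nonneg_left ?_ hγ0.le
    calc |∑ s', T s a s' * ((∑ a', π s' a' * Q s' a') - ∑ a', π' s' a' * Q s' a')|
        ≤ ∑ s', |T s a s' * ((∑ a', π s' a' * Q s' a') - ∑ a', π' s' a' * Q s' a')| :=
          Finset.abs_sum_le_sum_abs _ _
      _ ≤ ∑ s', T s a s' * (L * W1 s') := by
          apply Finset.sum_le_sum
          intro s' _
          rw [abs_mul, abs_of_nonneg (hT s a s')]
          exact mul_le_mul_of_nonneg_left (hWkey s') (hT s a s')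
  -- put everything together
  have step1 : ∑ s, w s * ∑ a, π' s a *
      |Q s a - (r s a + γ * ∑ s', T s a s' * ∑ a', π' s' a' * Q s' a')|
      ≤ ∑ s, w s * ∑ a, π' s a *
        (|Q s a - (r s a + γ * ∑ s', T s a s' * ∑ a', π s' a' * Q s' a')|
          + γ * ∑ s', T s a s' * (L * W1 s')) := by
    apply Finset.sum_le_sum
    intro s _
    apply mul_le_mul_of_nonneg_left ?_ (hwnn s)
    apply Finset.sum_le_sum
    intro a _
    exact mul_le_mul_of_nonneg_left (hpt s a) (hπ' s a)
  have step2 : ∑ s, w s * ∑ a, π' s a * (γ * ∑ s', T s a s' * (L * W1 s'))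
      ≤ ∑ s, w s * (L * W1 s) := by
    have hlhs : ∑ s, w s * ∑ a, π' s a * (γ * ∑ s', T s a s' * (L * W1 s'))
        = ∑ s', (L * W1 s') * (γ * ∑ s, ∑ a, w s * π' s a * T s a s') := by
      calc ∑ s, w s * ∑ a, π' s a * (γ * ∑ s', T s a s' * (L * W1 s'))
          = ∑ s, ∑ a, ∑ s', w s * π' s a * γ * (T s a s' * (L * W1 s')) := by
            simp only [Finset.mul_sum]
            exact Finset.sum_congr rfl fun s _ => Finset.sum_congr rfl fun a _ =>
              Finset.sum_congr rfl fun s' _ => by ring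
        _ = ∑ s, ∑ s', ∑ a, w s * π' s a * γ * (T s a s' * (L * W1 s')) :=
            Finset.sum_congr rfl fun s _ => by rw [Finset.sum_comm]
        _ = ∑ s', ∑ s, ∑ a, w s * π' s a * γ * (T s a s' * (L * W1 s')) := by
            rw [Finset.sum_comm]
        _ = ∑ s', (L * W1 s') * (γ * ∑ s, ∑ a, w s * π' s a * T s a s') := by
            refine Finset.sum_congr rfl fun s' _ => ?_
            simp only [Finset.mul_sum]
            exact Finset.sum_congr rfl fun s _ => Finset.sum_congr rfl fun a _ => by ring
    rw [hlhs]
    calc ∑ s', (L * W1 s') * (γ * ∑ s, ∑ a, w s * π' s a * T s a s')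
        ≤ ∑ s', (L * W1 s') * w s' := by
          apply Finset.sum_le_sum
          intro s' _
          exact mul_le_mul_of_nonneg_left (hflow s') (mul_nonneg hL (hW1nn s'))
      _ = ∑ s, w s * (L * W1 s) :=
          Finset.sum_congr rfl fun s' _ => by ring
  have expand1 : ∑ s, w s * ∑ a, π' s a *
      (|Q s a - (r s a + γ * ∑ s', T s a s' * ∑ a', π s' a' * Q s' a')|
        + γ * ∑ s', T s a s' * (L * W1 s'))
      = (∑ s, w s * ∑ a, π' s a *
          |Q s a - (r s a + γ * ∑ s', T s a s' * ∑ a', π s' a' * Q s' a')|)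
        + ∑ s, w s * ∑ a, π' s a * (γ * ∑ s', T s a s' * (L * W1 s')) := by
    rw [← Finset.sum_add_distrib]
    refine Finset.sum_congr rfl fun s _ => ?_
    rw [← mul_add, ← Finset.sum_add_distrib]
    refine congrArg _ (Finset.sum_congr rfl fun a _ => ?_)
    ring
  have expand2 : ∑ s, w s * ∑ a, π' s a *
      (|Q s a - (r s a + γ * ∑ s', T s a s' * ∑ a', π s' a' * Q s' a')| + L * W1 s)
      = (∑ s, w s * ∑ a, π' s a *
          |Q s a - (r s a + γ * ∑ s', T s a s' * ∑ a', π s' a' * Q s' a')|)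
        + ∑ s, w s * (L * W1 s) := by
    rw [← Finset.sum_add_distrib]
    refine Finset.sum_congr rfl fun s _ => ?_
    rw [← mul_add]
    refine congrArg _ ?_
    have hc : ∑ a, π' s a * (L * W1 s) = L * W1 s := by
      rw [← Finset.sum_mul, hπ'1, one_mul]
    have hsplit : ∑ a, π' s a *
        (|Q s a - (r s a + γ * ∑ s', T s a s' * ∑ a', π s' a' * Q s' a')| + L * W1 s)
        = ∑ a, (π' s a * |Q s a - (r s a + γ * ∑ s', T s a s' * ∑ a', π s' a' * Q s' a')|
            + π' s a * (L * W1 s)) :=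
      Finset.sum_congr rfl fun a _ => by ring
    rw [hsplit, Finset.sum_add_distrib, hc]
  rw [expand2]
  calc ∑ s, w s * ∑ a, π' s a *
        |Q s a - (r s a + γ * ∑ s', T s a s' * ∑ a', π' s' a' * Q s' a')|
      ≤ _ := step1
    _ = _ := expand1
    _ ≤ _ := add_le_add_right step2 _
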